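/- If a monomial system f: F_q^n → F_q^n is a fixed point system, then its Booleanization T(f): F_2^n → F_2^n is a fixed point system. -/

import Mathlib

/-- The monomial dynamical system with exponent matrix `A`. -/
def monomialMap {K : Type*} [CommRing K] {n : ℕ} (A : Matrix (Fin n) (Fin n) ℕ)
    (x : Fin n → K) : Fin n → K := fun i => ∏ j, x j ^ A i j

/-- The exponent matrix of the Booleanization `T(f)`. -/
def boolMat {n : ℕ} (A : Matrix (Fin n) (Fin n) ℕ) : Matrix (Fin n) (Fin n) ℕ :=
  fun i j => if 0 < A i j then 1 else 0

/-- A fixed point system: every periodic point is a fixed point. -/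
def IsFixedPointSystem {X : Type*} (g : X → X) : Prop :=
  ∀ x, (∃ t, 0 < t ∧ g^[t] x = x) → g x = x

/-- The 0/1 embedding of `ZMod 2` into a field, as a monoid hom. -/
def eHom (F : Type*) [Field F] : ZMod 2 →* F where
  toFun a := if a = 0 then 0 else 1
  map_one' := by norm_num
  map_mul' a b := by by_cases ha : a = 0 <;> by_cases hb : b = 0 <;> simp [ha, hb]

lemma eHom_inj (F : Type*) [Field F] : Function.Injective (eHom F) := by
  intro a b h
  have h2 : ∀ c : ZMod 2, c ≠ 0 → c = 1 := by decide
  by_cases ha : a = 0 <;> by_cases hb : b = 0 <;> simp_all [eHom]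

lemma key {F : Type*} [Field F] {n : ℕ} (A : Matrix (Fin n) (Fin n) ℕ)
    (x : Fin n → ZMod 2) :
    monomialMap (K := F) A (fun j => eHom F (x j)) =
      fun i => eHom F (monomialMap (K := ZMod 2) (boolMat A) x i) := by
  funext i
  simp only [monomialMap, map_prod, map_pow]
  refine Finset.prod_congr rfl fun j _ => ?_
  unfold boolMat
  rcases Nat.eq_zero_or_pos (A i j) with h | h
  · simp [h]
  · rw [if_pos h, pow_one]
    obtain ⟨a, ha⟩ : ∃ a, a = x j := ⟨x j, rfl⟩
    rw [← ha]
    fin_cases a <;> simp [eHom, zero_pow h.ne']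

theorem stmt13 {F : Type*} [Field F] [Fintype F] {n : ℕ}
    (A : Matrix (Fin n) (Fin n) ℕ)
    (hf : IsFixedPointSystem (monomialMap (K := F) A)) :
    IsFixedPointSystem (monomialMap (K := ZMod 2) (boolMat A)) := by
  rintro x ⟨t, ht, hx⟩
  set g := monomialMap (K := ZMod 2) (boolMat A) with hg
  set f := monomialMap (K := F) A with hfd
  set E : (Fin n → ZMod 2) → (Fin n → F) := fun y j => eHom F (y j) with hE
  have hsc : ∀ y, f (E y) = E (g y) := fun y => key A y
  have hit : ∀ m y, f^[m] (E y) = E (g^[m] y) := by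
    intro m
    induction m with
    | zero => intro y; simp
    | succ m ih =>
      intro y
      rw [Function.iterate_succ_apply, hsc, ih, Function.iterate_succ_apply]
  have hfix : f (E x) = E x := hf (E x) ⟨t, ht, by rw [hit, hx]⟩
  have hEe : E (g x) = E x := by rw [← hsc, hfix]
  funext i
  exact eHom_inj F (congrFun hEe i)
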